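/- A dcpo L is strongly continuous if and only if L is continuous and the strong Scott topology coincides with the Scott topology: σ_s(L) = σ(L). -/
import Mathlib


open Set

variable {L : Type*}

/-- A directed subset: nonempty and directed under `≤`. -/
def DirSet [Preorder L] (D : Set L) : Prop := D.Nonempty ∧ DirectedOn (· ≤ ·) D

/-- Strongly Scott open sets (the family `σ^s(L)`). -/
def StronglyScottOpen [Preorder L] [SupSet L] (U : Set L) : Prop :=
  IsUpperSet U ∧ ∀ D : Set L, DirSet D → ∀ x : L,
    Ici (sSup D) ∩ Ici x ⊆ U → ∃ d ∈ D, Ici d ∩ Ici x ⊆ U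

/-- The strong Scott topology `σ_s(L)`, generated by the strongly Scott open sets. -/
def strongScott (L : Type*) [Preorder L] [SupSet L] : TopologicalSpace L :=
  TopologicalSpace.generateFrom {U | StronglyScottOpen U}

/-- Scott open sets. -/
def ScottOpen [Preorder L] [SupSet L] (U : Set L) : Prop :=
  IsUpperSet U ∧ ∀ D : Set L, DirSet D → sSup D ∈ U → (D ∩ U).Nonempty

/-- The Scott topology `σ(L)`. -/
def scottTop (L : Type*) [Preorder L] [SupSet L] : TopologicalSpace L :=
  TopologicalSpace.generateFrom {U | ScottOpen U}

/-- The upper topology `υ(L)`. -/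
def upperTop (L : Type*) [Preorder L] : TopologicalSpace L :=
  TopologicalSpace.generateFrom {U | ∃ x : L, U = (Iic x)ᶜ}

/-- The lower topology `ω(L)`. -/
def lowerTop (L : Type*) [Preorder L] : TopologicalSpace L :=
  TopologicalSpace.generateFrom {U | ∃ x : L, U = (Ici x)ᶜ}

/-- The strong way-below relation `x ≪_s y`. -/
def SWayBelow [Preorder L] (x y : L) : Prop :=
  ∀ D : Set L, DirSet D → ∀ a : L,
    (⋂ d ∈ D, Ici d) ∩ Ici a ⊆ Ici y → ∃ d ∈ D, Ici d ∩ Ici a ⊆ Ici x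

/-- The way-below relation `x ≪ y`. -/
def WayBelow [Preorder L] [SupSet L] (x y : L) : Prop :=
  ∀ D : Set L, DirSet D → y ≤ sSup D → ∃ d ∈ D, x ≤ d

/-- `X` with topology `t` is a C-space (w.r.t. the order of `L`). -/
def IsCSpace [Preorder L] (t : TopologicalSpace L) : Prop :=
  ∀ U : Set L, @IsOpen _ (t) U → ∀ x ∈ U, ∃ y ∈ U,
    x ∈ @interior L t (Ici y) ∧ Ici y ⊆ U

/-- `L` is a strongly continuous domain. -/
def StronglyContinuousDomain (L : Type*) [Preorder L] [SupSet L] : Prop :=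
  IsCSpace (strongScott L)

/-- `L` is a continuous domain. -/
def ContinuousDomain (L : Type*) [Preorder L] [SupSet L] : Prop :=
  ∀ x : L, DirSet {y | WayBelow y x} ∧ IsLUB {y | WayBelow y x} x

/-- `L` is a hypercontinuous domain. -/
def HypercontinuousDomain (L : Type*) [Preorder L] : Prop :=
  ∀ x : L, DirSet {y | x ∈ @interior L (upperTop L) (Ici y)} ∧
    IsLUB {y | x ∈ @interior L (upperTop L) (Ici y)} x

/-- The strong Lawson topology `λ_s(L)`: common refinement of `σ_s(L)` and `ω(L)`. -/
def strongLawson (L : Type*) [Preorder L] [SupSet L] : TopologicalSpace L :=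
  TopologicalSpace.generateFrom
    {U | @IsOpen _ (strongScott L) U ∨ @IsOpen _ (lowerTop L) U}

section Aux

variable [CompletePartialOrder L]

lemma isOpen_generateFrom' {g : Set (Set L)} {s : Set L} :
    @IsOpen _ (TopologicalSpace.generateFrom g) s ↔ TopologicalSpace.GenerateOpen g s :=
  Iff.rfl

lemma sso_univ : StronglyScottOpen (univ : Set L) := by
  refine ⟨isUpperSet_univ, fun D hD x _ => ?_⟩
  obtain ⟨d, hd⟩ := hD.1
  exact ⟨d, hd, fun z _ => trivial⟩

lemma sso_inter {U V : Set L} (hU : StronglyScottOpen U) (hV : StronglyScottOpen V) :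
    StronglyScottOpen (U ∩ V) := by
  refine ⟨hU.1.inter hV.1, fun D hD x h => ?_⟩
  obtain ⟨d1, hd1, h1⟩ := hU.2 D hD x (h.trans inter_subset_left)
  obtain ⟨d2, hd2, h2⟩ := hV.2 D hD x (h.trans inter_subset_right)
  obtain ⟨d, hd, hd1', hd2'⟩ := hD.2 d1 hd1 d2 hd2
  refine ⟨d, hd, fun z hz => ?_⟩
  exact ⟨h1 ⟨hd1'.trans hz.1, hz.2⟩, h2 ⟨hd2'.trans hz.1, hz.2⟩⟩

/-- every strongScott-open set containing a point contains a strongly Scott open nbhd. -/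
lemma strongScott_basis {W : Set L} (hW : @IsOpen _ (strongScott L) W) :
    ∀ x ∈ W, ∃ V, StronglyScottOpen V ∧ x ∈ V ∧ V ⊆ W := by
  rw [strongScott, isOpen_generateFrom'] at hW
  induction hW with
  | basic U hU => exact fun x hx => ⟨U, hU, hx, subset_rfl⟩
  | univ => exact fun x _ => ⟨univ, sso_univ, trivial, subset_rfl⟩
  | inter U V _ _ ihU ihV =>
    rintro x ⟨hxU, hxV⟩
    obtain ⟨V1, h1, hx1, hs1⟩ := ihU x hxU
    obtain ⟨V2, h2, hx2, hs2⟩ := ihV x hxV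
    exact ⟨V1 ∩ V2, sso_inter h1 h2, ⟨hx1, hx2⟩, inter_subset_inter hs1 hs2⟩
  | sUnion S _ ih =>
    rintro x ⟨t, htS, hxt⟩
    obtain ⟨V, h1, h2, h3⟩ := ih t htS x hxt
    exact ⟨V, h1, h2, h3.trans (subset_sUnion_of_mem htS)⟩

lemma sso_scottOpen {U : Set L} (hU : StronglyScottOpen U) : ScottOpen U := by
  refine ⟨hU.1, fun D hD hsup => ?_⟩
  obtain ⟨d0, hd0⟩ := hD.1
  obtain ⟨d, hd, hsub⟩ := hU.2 D hD d0
    (fun z hz => hU.1 hz.1 hsup)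
  obtain ⟨e, he, hde, hd0e⟩ := hD.2 d hd d0 hd0
  exact ⟨e, he, hsub ⟨hde, hd0e⟩⟩

/-- complements of principal ideals are strongly Scott open. -/
lemma sso_compl_Iic (b : L) : StronglyScottOpen ((Iic b)ᶜ : Set L) := by
  constructor
  · intro z w hzw hz hw
    exact hz (hzw.trans hw)
  · intro D hD a h
    by_contra hcon
    push_neg at hcon
    have hcon' : ∀ d ∈ D, ∃ z, z ∈ Ici d ∩ Ici a ∧ z ≤ b := by
      intro d hd
      have h2 := hcon d hd
      rw [not_subset] at h2
      obtain ⟨z, hz, hz2⟩ := h2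
      exact ⟨z, hz, not_not.mp hz2⟩
    have hub : ∀ d ∈ D, d ≤ b := by
      intro d hd
      obtain ⟨z, hz, hz2⟩ := hcon' d hd
      exact hz.1.trans hz2
    have hsup : sSup D ≤ b :=
      (CompletePartialOrder.lubOfDirected D hD.2).2 hub
    obtain ⟨d0, hd0⟩ := hD.1
    obtain ⟨z, hz, hz2⟩ := hcon' d0 hd0
    have hab : a ≤ b := hz.2.trans hz2
    exact (h ⟨hsup, hab⟩) le_rfl

lemma wayBelow_of_mem_interior {x y : L}
    (h : x ∈ @interior L (strongScott L) (Ici y)) : WayBelow y x := by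
  letI := strongScott L
  obtain ⟨V, hV, hxV, hVi⟩ := strongScott_basis isOpen_interior x h
  have hVy : V ⊆ Ici y := hVi.trans interior_subset
  intro D hD hx
  obtain ⟨d0, hd0⟩ := hD.1
  have hsub : Ici (sSup D) ∩ Ici d0 ⊆ V := fun z hz =>
    hV.1 (hx.trans hz.1) hxV
  obtain ⟨d, hd, hdsub⟩ := hV.2 D hD d0 hsub
  obtain ⟨e, he, hde, hd0e⟩ := hD.2 d hd d0 hd0
  exact ⟨e, he, hVy (hdsub ⟨hde, hd0e⟩)⟩

lemma wayBelow_le {x y : L} (h : WayBelow y x) : y ≤ x := by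
  have hdir : DirSet ({x} : Set L) :=
    ⟨⟨x, rfl⟩, fun a ha b hb => ⟨x, rfl, by simp_all, by simp_all⟩⟩
  have hlub := CompletePartialOrder.lubOfDirected {x} hdir.2
  obtain ⟨d, hd, hyd⟩ := h {x} hdir (hlub.1 rfl)
  simp only [mem_singleton_iff] at hd
  exact hd ▸ hyd

lemma wayBelow_of_le {x y u : L} (hyu : y ≤ u) (h : WayBelow u x) : WayBelow y x :=
  fun D hD hx => (h D hD hx).imp fun d hd => ⟨hd.1, hyu.trans hd.2⟩

lemma wayBelow_le_of {x x' y : L} (h : WayBelow y x) (hx : x ≤ x') : WayBelow y x' :=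
  fun D hD hx' => h D hD (hx.trans hx')

/-- interpolation in a continuous domain. -/
lemma wayBelow_interpolate (hc : ContinuousDomain L) {x y : L} (h : WayBelow y x) :
    ∃ z, WayBelow y z ∧ WayBelow z x := by
  set E : Set L := {u | ∃ z, WayBelow u z ∧ WayBelow z x} with hE
  have hEdir : DirSet E := by
    constructor
    · obtain ⟨z, hz⟩ := (hc x).1.1
      obtain ⟨u, hu⟩ := (hc z).1.1
      exact ⟨u, z, hu, hz⟩
    · rintro u1 ⟨z1, hu1, hz1⟩ u2 ⟨z2, hu2, hz2⟩
      obtain ⟨z, hz, h1z, h2z⟩ := (hc x).1.2 z1 hz1 z2 hz2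
      obtain ⟨u, hu, h1u, h2u⟩ := (hc z).1.2 u1 (wayBelow_le_of hu1 h1z)
        u2 (wayBelow_le_of hu2 h2z)
      exact ⟨u, ⟨z, hu, hz⟩, h1u, h2u⟩
  have hElub : IsLUB E x := by
    constructor
    · rintro u ⟨z, huz, hzx⟩
      exact (wayBelow_le huz).trans (wayBelow_le hzx)
    · intro b hb
      refine (hc x).2.2 (fun z hz => ?_)
      exact (hc z).2.2 (fun u hu => hb ⟨z, hu, hz⟩)
  have hsupE : sSup E = x := (CompletePartialOrder.lubOfDirected E hEdir.2).unique hElub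
  obtain ⟨u, huE, hyu⟩ := h E hEdir (le_of_eq hsupE.symm)
  obtain ⟨z, huz, hzx⟩ := huE
  exact ⟨z, wayBelow_of_le hyu huz, hzx⟩

lemma scottOpen_wayBelowSet (hc : ContinuousDomain L) (y : L) :
    ScottOpen {z | WayBelow y z} := by
  refine ⟨fun a b hab ha => wayBelow_le_of ha hab, fun D hD hsup => ?_⟩
  obtain ⟨w, hyw, hwD⟩ := wayBelow_interpolate hc hsup
  obtain ⟨d, hd, hwd⟩ := hwD D hD le_rfl
  exact ⟨d, hd, wayBelow_le_of hyw hwd⟩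

lemma sSup_wayBelow (hc : ContinuousDomain L) (x : L) : sSup {y | WayBelow y x} = x :=
  (CompletePartialOrder.lubOfDirected _ (hc x).1.2).unique (hc x).2

lemma scottTop_isOpen_scottOpen {U : Set L} (hU : @IsOpen _ (scottTop L) U) :
    ScottOpen U := by
  rw [scottTop, isOpen_generateFrom'] at hU
  induction hU with
  | basic U hU => exact hU
  | univ =>
    refine ⟨isUpperSet_univ, fun D hD _ => hD.1.imp fun d hd => ⟨hd, trivial⟩⟩
  | inter U V _ _ ihU ihV =>
    refine ⟨ihU.1.inter ihV.1, fun D hD hsup => ?_⟩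
    obtain ⟨d1, hd1, hd1U⟩ := ihU.2 D hD hsup.1
    obtain ⟨d2, hd2, hd2V⟩ := ihV.2 D hD hsup.2
    obtain ⟨d, hd, h1, h2⟩ := hD.2 d1 hd1 d2 hd2
    exact ⟨d, hd, ihU.1 h1 hd1U, ihV.1 h2 hd2V⟩
  | sUnion S _ ih =>
    refine ⟨fun a b hab ha => ?_, fun D hD hsup => ?_⟩
    · obtain ⟨t, htS, hat⟩ := ha
      exact ⟨t, htS, (ih t htS).1 hab hat⟩
    · obtain ⟨t, htS, hsupt⟩ := hsup
      obtain ⟨d, hd, hdt⟩ := (ih t htS).2 D hD hsupt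
      exact ⟨d, hd, t, htS, hdt⟩

end Aux

theorem stronglyContinuous_iff_continuous_and_strongScott_eq_scott
    [CompletePartialOrder L] :
    StronglyContinuousDomain L ↔
      ContinuousDomain L ∧ strongScott L = scottTop L := by
  constructor
  · intro SC
    letI := strongScott L
    set W : L → Set L := fun x => {y | x ∈ @interior L (strongScott L) (Ici y)} with hW
    have hWdir : ∀ x : L, DirSet (W x) := by
      intro x
      constructor
      · have huniv : @IsOpen _ (strongScott L) univ :=
          TopologicalSpace.GenerateOpen.basic _ sso_univ
        obtain ⟨y, _, hy, _⟩ := SC univ huniv x trivial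
        exact ⟨y, hy⟩
      · intro y1 hy1 y2 hy2
        have hop : IsOpen (interior (Ici y1) ∩ interior (Ici y2)) :=
          isOpen_interior.inter isOpen_interior
        obtain ⟨z, hzU, hzint, _⟩ := SC _ hop x ⟨hy1, hy2⟩
        exact ⟨z, hzint, interior_subset hzU.1, interior_subset hzU.2⟩
    have hWlub : ∀ x : L, IsLUB (W x) x := by
      intro x
      constructor
      · intro y hy
        exact interior_subset hy
      · intro b hb
        by_contra hxb
        have hU : @IsOpen _ (strongScott L) ((Iic b)ᶜ) :=
          TopologicalSpace.GenerateOpen.basic _ (sso_compl_Iic b)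
        obtain ⟨y, hyU, hyint, _⟩ := SC _ hU x hxb
        exact hyU (hb hyint)
    have hWsup : ∀ x : L, sSup (W x) = x := fun x =>
      (CompletePartialOrder.lubOfDirected _ (hWdir x).2).unique (hWlub x)
    have hWsub : ∀ x : L, W x ⊆ {y | WayBelow y x} := fun x y hy =>
      wayBelow_of_mem_interior hy
    have hcont : ContinuousDomain L := by
      intro x
      have hdir : DirSet {y | WayBelow y x} := by
        refine ⟨(hWdir x).1.mono (hWsub x), ?_⟩
        intro y1 hy1 y2 hy2
        obtain ⟨d1, hd1, hyd1⟩ := hy1 (W x) (hWdir x) (le_of_eq (hWsup x).symm)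
        obtain ⟨d2, hd2, hyd2⟩ := hy2 (W x) (hWdir x) (le_of_eq (hWsup x).symm)
        obtain ⟨d, hd, h1, h2⟩ := (hWdir x).2 d1 hd1 d2 hd2
        exact ⟨d, hWsub x hd, hyd1.trans h1, hyd2.trans h2⟩
      refine ⟨hdir, fun y hy => wayBelow_le hy, fun b hb => ?_⟩
      exact (hWlub x).2 (fun y hy => hb (hWsub x hy))
    have heq : strongScott L = scottTop L := by
      apply le_antisymm
      · rw [scottTop]
        apply le_generateFrom
        intro U hU
        rw [isOpen_iff_forall_mem_open]
        intro x hx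
        have hxs : sSup (W x) ∈ U := (hWsup x).symm ▸ hx
        obtain ⟨y, hyW, hyU⟩ := hU.2 (W x) (hWdir x) hxs
        exact ⟨interior (Ici y), interior_subset.trans (fun z hz => hU.1 hz hyU),
          isOpen_interior, hyW⟩
      · rw [strongScott]
        apply le_generateFrom
        intro U hU
        exact TopologicalSpace.GenerateOpen.basic U (sso_scottOpen hU)
    exact ⟨hcont, heq⟩
  · rintro ⟨hc, heq⟩
    rw [StronglyContinuousDomain, heq]
    intro U hU x hx
    letI := scottTop L
    have hU' : ScottOpen U := scottTop_isOpen_scottOpen hU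
    have hsup : sSup {y | WayBelow y x} ∈ U := (sSup_wayBelow hc x).symm ▸ hx
    obtain ⟨y, hy, hyU⟩ := hU'.2 _ (hc x).1 hsup
    refine ⟨y, hyU, ?_, fun z hz => hU'.1 hz hyU⟩
    rw [mem_interior]
    exact ⟨{z | WayBelow y z}, fun z hz => wayBelow_le hz,
      TopologicalSpace.GenerateOpen.basic _ (scottOpen_wayBelowSet hc y), hy⟩
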